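/- Let β be a measure-preserving action of a countable group Γ on a standard Borel probability space (X,μ). For γ ∈ Char(Γ), call a measurable function f : X → circle a γ-eigenfunction if for every h ∈ Γ, f(h⁻¹ • x) = γ(h) · f(x) for μ-almost every x. Then: (a) if f is a γ-eigenfunction and f' is a γ'-eigenfunction, then the pointwise product f·f' is a (γ·γ')-eigenfunction; (b) the set Char_β(Γ) of all γ ∈ Char(Γ) admitting a γ-eigenfunction is a subgroup of Char(Γ); (c) Char_β(Γ) is countable. -/

import Mathlib

open MeasureTheory Filter

noncomputable instance : MeasurableSpace Circle := borel Circle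
instance : BorelSpace Circle := ⟨rfl⟩

instance : SecondCountableTopology Circle :=
  inferInstanceAs (SecondCountableTopology (Submonoid.unitSphere ℂ))

lemma circle_coe_measurable : Measurable (fun z : Circle => (z : ℂ)) := by
  have h : Continuous (fun z : Circle => (z : ℂ)) := continuous_subtype_val
  exact h.measurable

lemma circle_memL2 {X : Type*} [MeasurableSpace X] (μ : Measure X) [IsFiniteMeasure μ]
    (f : X → Circle) (hf : Measurable f) : MemLp (fun x => (f x : ℂ)) 2 μ := by
  refine MemLp.of_bound ((circle_coe_measurable.comp hf).aestronglyMeasurable) 1 ?_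
  filter_upwards with x
  exact (Circle.norm_coe (f x)).le

lemma inner_toLp_eq {X : Type*} [MeasurableSpace X] {μ : Measure X} {f g : X → ℂ}
    (hf : MemLp f 2 μ) (hg : MemLp g 2 μ) :
    inner ℂ (hf.toLp f) (hg.toLp g) = ∫ x, (starRingEnd ℂ) (f x) * g x ∂μ := by
  rw [MeasureTheory.L2.inner_def]
  apply integral_congr_ae
  filter_upwards [MemLp.coeFn_toLp hf, MemLp.coeFn_toLp hg] with x h1 h2
  rw [h1, h2, RCLike.inner_apply, mul_comm]

/-- For a measure-preserving action `β` of a countable group `Γ` on a standard Borel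
probability space: (a) the product of a `γ`-eigenfunction and a `γ'`-eigenfunction is a
`γ·γ'`-eigenfunction; (b) the set `Char_β(Γ)` of characters admitting an eigenfunction is a
subgroup of `Char(Γ)`; (c) `Char_β(Γ)` is countable. -/
theorem stmt8 {Γ X : Type*} [Group Γ] [Countable Γ] [MeasurableSpace X]
    [StandardBorelSpace X] (μ : Measure X) [IsProbabilityMeasure μ] [MulAction Γ X]
    (hmp : ∀ h : Γ, MeasurePreserving (fun x : X => h • x) μ μ) :
    (∀ (γ γ' : Γ →* Circle) (f f' : X → Circle),
      (Measurable f ∧ ∀ h : Γ, ∀ᵐ x ∂μ, f (h⁻¹ • x) = γ h * f x) →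
      (Measurable f' ∧ ∀ h : Γ, ∀ᵐ x ∂μ, f' (h⁻¹ • x) = γ' h * f' x) →
      (Measurable (fun x => f x * f' x) ∧
        ∀ h : Γ, ∀ᵐ x ∂μ, f (h⁻¹ • x) * f' (h⁻¹ • x) = (γ h * γ' h) * (f x * f' x)))
    ∧ (∃ S : Subgroup (Γ →* Circle), (S : Set (Γ →* Circle)) =
        {γ : Γ →* Circle | ∃ f : X → Circle,
          Measurable f ∧ ∀ h : Γ, ∀ᵐ x ∂μ, f (h⁻¹ • x) = γ h * f x})
    ∧ {γ : Γ →* Circle | ∃ f : X → Circle,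
        Measurable f ∧ ∀ h : Γ, ∀ᵐ x ∂μ, f (h⁻¹ • x) = γ h * f x}.Countable := by
  have parta : ∀ (γ γ' : Γ →* Circle) (f f' : X → Circle),
      (Measurable f ∧ ∀ h : Γ, ∀ᵐ x ∂μ, f (h⁻¹ • x) = γ h * f x) →
      (Measurable f' ∧ ∀ h : Γ, ∀ᵐ x ∂μ, f' (h⁻¹ • x) = γ' h * f' x) →
      (Measurable (fun x => f x * f' x) ∧
        ∀ h : Γ, ∀ᵐ x ∂μ, f (h⁻¹ • x) * f' (h⁻¹ • x) = (γ h * γ' h) * (f x * f' x)) := by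
    rintro γ γ' f f' ⟨hf, hfe⟩ ⟨hf', hf'e⟩
    refine ⟨hf.mul hf', fun h => ?_⟩
    filter_upwards [hfe h, hf'e h] with x e1 e2
    rw [e1, e2, mul_mul_mul_comm]
  refine ⟨parta, ?_, ?_⟩
  · have hone : (1 : Γ →* Circle) ∈ {γ : Γ →* Circle | ∃ f : X → Circle,
        Measurable f ∧ ∀ h : Γ, ∀ᵐ x ∂μ, f (h⁻¹ • x) = γ h * f x} :=
      ⟨fun _ => 1, measurable_const, fun h => ae_of_all _ fun x => by simp⟩
    have hmul : ∀ γ γ', γ ∈ {γ : Γ →* Circle | ∃ f : X → Circle,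
          Measurable f ∧ ∀ h : Γ, ∀ᵐ x ∂μ, f (h⁻¹ • x) = γ h * f x} →
        γ' ∈ {γ : Γ →* Circle | ∃ f : X → Circle,
          Measurable f ∧ ∀ h : Γ, ∀ᵐ x ∂μ, f (h⁻¹ • x) = γ h * f x} →
        γ * γ' ∈ {γ : Γ →* Circle | ∃ f : X → Circle,
          Measurable f ∧ ∀ h : Γ, ∀ᵐ x ∂μ, f (h⁻¹ • x) = γ h * f x} := by
      rintro γ γ' ⟨f, hf⟩ ⟨f', hf'⟩
      obtain ⟨hm, he⟩ := parta γ γ' f f' hf hf'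
      exact ⟨fun x => f x * f' x, hm, fun h => (he h).mono fun x hx => by simpa using hx⟩
    have hinv : ∀ γ, γ ∈ {γ : Γ →* Circle | ∃ f : X → Circle,
          Measurable f ∧ ∀ h : Γ, ∀ᵐ x ∂μ, f (h⁻¹ • x) = γ h * f x} →
        γ⁻¹ ∈ {γ : Γ →* Circle | ∃ f : X → Circle,
          Measurable f ∧ ∀ h : Γ, ∀ᵐ x ∂μ, f (h⁻¹ • x) = γ h * f x} := by
      rintro γ ⟨f, hf, hfe⟩
      refine ⟨fun x => (f x)⁻¹, hf.inv, fun h => (hfe h).mono fun x e => ?_⟩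
      show (f (h⁻¹ • x))⁻¹ = γ⁻¹ h * (f x)⁻¹
      rw [e]; simp [mul_inv, mul_comm]
    exact ⟨Subgroup.mk (Submonoid.mk (Subsemigroup.mk _ (fun ha hb => hmul _ _ ha hb)) hone)
      (fun ha => hinv _ ha), rfl⟩
  · -- countability
    haveI : Fact ((2 : ENNReal) ≠ ⊤) := ⟨by norm_num⟩
    apply Set.countable_coe_iff.mp
    choose F hFm hFe using fun γ : {γ : Γ →* Circle | ∃ f : X → Circle,
        Measurable f ∧ ∀ h : Γ, ∀ᵐ x ∂μ, f (h⁻¹ • x) = γ h * f x} => γ.2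
    let T : _ → Lp ℂ 2 μ := fun γ => (circle_memL2 μ (F γ) (hFm γ)).toLp _
    have hinner1 : ∀ γ, inner ℂ (T γ) (T γ) = 1 := by
      intro γ
      rw [inner_toLp_eq]
      have : ∀ x, (starRingEnd ℂ) (F γ x : ℂ) * (F γ x : ℂ) = 1 := by
        intro x
        have hz := Complex.mul_conj (F γ x : ℂ)
        rw [mul_comm] at hz
        rw [hz]; simp
      rw [integral_congr_ae (ae_of_all _ this), integral_const]
      simp
    have horth : ∀ γ γ', γ ≠ γ' → inner ℂ (T γ) (T γ') = 0 := by
      intro γ γ' hne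
      have hex : ∃ h : Γ, γ.1 h ≠ γ'.1 h := by
        by_contra hc
        push_neg at hc
        exact hne (Subtype.ext (MonoidHom.ext hc))
      obtain ⟨h, hh⟩ := hex
      set I := ∫ x, (starRingEnd ℂ) (F γ x : ℂ) * (F γ' x : ℂ) ∂μ with hI
      let e : X ≃ᵐ X :=
        { toFun := fun x => h⁻¹ • x
          invFun := fun x => h • x
          left_inv := fun x => smul_inv_smul h x
          right_inv := fun x => inv_smul_smul h x
          measurable_toFun := (hmp h⁻¹).measurable
          measurable_invFun := (hmp h).measurable }
      have hcomp : ∫ x, (starRingEnd ℂ) (F γ (h⁻¹ • x) : ℂ) * (F γ' (h⁻¹ • x) : ℂ) ∂μ = I :=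
        (hmp h⁻¹).integral_comp e.measurableEmbedding
          (fun x => (starRingEnd ℂ) (F γ x : ℂ) * (F γ' x : ℂ))
      have hstep : ∫ x, (starRingEnd ℂ) (F γ (h⁻¹ • x) : ℂ) * (F γ' (h⁻¹ • x) : ℂ) ∂μ
          = ((starRingEnd ℂ) ((γ.1 h : ℂ)) * (γ'.1 h : ℂ)) * I := by
        have hae : ∀ᵐ x ∂μ, (starRingEnd ℂ) (F γ (h⁻¹ • x) : ℂ) * (F γ' (h⁻¹ • x) : ℂ)
            = ((starRingEnd ℂ) ((γ.1 h : ℂ)) * (γ'.1 h : ℂ))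
              * ((starRingEnd ℂ) (F γ x : ℂ) * (F γ' x : ℂ)) := by
          filter_upwards [hFe γ h, hFe γ' h] with x e1 e2
          rw [e1, e2, Circle.coe_mul, Circle.coe_mul, map_mul]
          ring
        rw [integral_congr_ae hae, hI, integral_const_mul]
      set c : ℂ := (starRingEnd ℂ) ((γ.1 h : ℂ)) * (γ'.1 h : ℂ) with hc
      have hEq : I = c * I := hcomp.symm.trans hstep
      have hcne : c ≠ 1 := by
        rw [hc, ← Circle.coe_inv_eq_conj, ← Circle.coe_mul]
        rw [Ne, Circle.coe_eq_one, inv_mul_eq_one]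
        exact hh
      have hzero : (c - 1) * I = 0 := by
        rw [sub_mul, one_mul, ← hEq, sub_self]
      have : I = 0 := by
        rcases mul_eq_zero.mp hzero with h0 | h0
        · exact absurd (sub_eq_zero.mp h0) hcne
        · exact h0
      rw [inner_toLp_eq, ← hI, this]
    have hdist : ∀ γ γ', γ ≠ γ' → (1 : ℝ) ≤ dist (T γ) (T γ') := by
      intro γ γ' hne
      have hsq : ‖T γ - T γ'‖ ^ 2 = 2 := by
        rw [@norm_sub_sq ℂ _ _ _ _ (T γ) (T γ')]
        have h1 : ‖T γ‖ ^ 2 = 1 := by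
          rw [← @inner_self_eq_norm_sq ℂ _ _ _ _ (T γ), hinner1 γ]; simp
        have h2 : ‖T γ'‖ ^ 2 = 1 := by
          rw [← @inner_self_eq_norm_sq ℂ _ _ _ _ (T γ'), hinner1 γ']; simp
        rw [h1, h2, horth γ γ' hne]
        norm_num
      have h0 : 0 ≤ ‖T γ - T γ'‖ := norm_nonneg _
      rw [dist_eq_norm]
      nlinarith
    refine Pairwise.countable_of_isOpen_disjoint
      (s := fun γ => Metric.ball (T γ) (1/2)) ?_ (fun _ => Metric.isOpen_ball) ?_
    · intro γ γ' hne
      have := hdist γ γ' hne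
      apply Metric.ball_disjoint_ball
      linarith
    · intro γ
      exact ⟨T γ, Metric.mem_ball_self (by norm_num)⟩
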